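/- Let θ : ℝ → ℝ be differentiable at some t with θ(t) ∈ (−1, 1) and |θ'(t)| ≤ B for a constant B ≥ 0. Then t ↦ υ(θ(t)) is differentiable at t and |(υ ∘ θ)'(t)| ≤ max(π·v̄/(2·c), 2·v̄·c/π)·B. -/

import Mathlib

open Real

/-- For the controller map
`υ(θ) = −(2·v̄/π)·arctan((π/(2·c))·tan((π/2)·θ))` (with `v̄ > 0`, `c > 0`):
if `θ : ℝ → ℝ` is differentiable at `t` with `θ(t) ∈ (−1, 1)` and `|θ'(t)| ≤ B`
for a constant `B ≥ 0`, then `t ↦ υ(θ(t))` is differentiable at `t` and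
`|(υ ∘ θ)'(t)| ≤ max(π·v̄/(2·c), 2·v̄·c/π)·B`. -/
theorem controller_composition_deriv_bound (vbar c B : ℝ) (hv : 0 < vbar) (hc : 0 < c)
    (hB : 0 ≤ B) (θ : ℝ → ℝ) (t : ℝ)
    (hθ : DifferentiableAt ℝ θ t)
    (hθt : θ t ∈ Set.Ioo (-1 : ℝ) 1)
    (hθ' : |deriv θ t| ≤ B) :
    DifferentiableAt ℝ
      (fun s : ℝ => -(2 * vbar / π) * Real.arctan (π / (2 * c) * Real.tan (π / 2 * θ s))) t ∧
    |deriv (fun s : ℝ => -(2 * vbar / π) * Real.arctan (π / (2 * c) * Real.tan (π / 2 * θ s))) t|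
      ≤ max (π * vbar / (2 * c)) (2 * vbar * c / π) * B := by
  have hπ : (0:ℝ) < π := Real.pi_pos
  set x := π / 2 * θ t with hx
  have hxI : x ∈ Set.Ioo (-(π/2)) (π/2) := by
    constructor
    · nlinarith [hθt.1]
    · nlinarith [hθt.2]
  have hcos : Real.cos x ≠ 0 := (Real.cos_pos_of_mem_Ioo hxI).ne'
  set a := π / (2 * c) with ha
  have ha0 : 0 < a := by positivity
  set T := Real.tan x with hT
  have h1 : HasDerivAt θ (deriv θ t) t := hθ.hasDerivAt
  have h2 : HasDerivAt (fun s => π / 2 * θ s) (π / 2 * deriv θ t) t := h1.const_mul _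
  have h3 : HasDerivAt (fun s => Real.tan (π / 2 * θ s))
      (1 / Real.cos x ^ 2 * (π / 2 * deriv θ t)) t := by
    simpa [Function.comp_def] using (Real.hasDerivAt_tan hcos).comp t h2
  have h4 : HasDerivAt (fun s => a * Real.tan (π / 2 * θ s))
      (a * (1 / Real.cos x ^ 2 * (π / 2 * deriv θ t))) t := h3.const_mul _
  have h5 : HasDerivAt (fun s => Real.arctan (a * Real.tan (π / 2 * θ s)))
      (1 / (1 + (a * T) ^ 2) * (a * (1 / Real.cos x ^ 2 * (π / 2 * deriv θ t)))) t := by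
    simpa [Function.comp_def] using (Real.hasDerivAt_arctan (a * T)).comp t h4
  have h6 : HasDerivAt (fun s : ℝ =>
      -(2 * vbar / π) * Real.arctan (a * Real.tan (π / 2 * θ s)))
      (-(2 * vbar / π) *
        (1 / (1 + (a * T) ^ 2) * (a * (1 / Real.cos x ^ 2 * (π / 2 * deriv θ t))))) t :=
    h5.const_mul _
  refine ⟨h6.differentiableAt, ?_⟩
  rw [h6.deriv]
  have hcos2 : (1 / Real.cos x ^ 2) = 1 + T ^ 2 := by
    rw [one_div, ← Real.inv_one_add_tan_sq hcos, inv_inv]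
  have hden : 0 < 1 + (a * T) ^ 2 := by positivity
  -- coefficient K
  have haeq : a * (2 * c) = π := by rw [ha]; field_simp
  have key : (2 * vbar / π) * (1 / (1 + (a * T) ^ 2)) * a * (1 + T ^ 2) * (π / 2)
      ≤ max (π * vbar / (2 * c)) (2 * vbar * c / π) := by
    have hrw : (2 * vbar / π) * (1 / (1 + (a * T) ^ 2)) * a * (1 + T ^ 2) * (π / 2)
        = (vbar * a * (1 + T ^ 2)) / (1 + (a * T) ^ 2) := by
      field_simp
    rw [hrw]
    rcases le_total a 1 with hA | hA
    · refine le_trans ?_ (le_max_right _ _)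
      rw [div_le_div_iff₀ hden hπ, ← haeq]
      have ha2 : a ^ 2 ≤ 1 := by nlinarith
      nlinarith [mul_nonneg (mul_nonneg hv.le hc.le)
          (mul_nonneg (sub_nonneg.2 ha2) (sq_nonneg T)),
        mul_pos hv hc, sq_nonneg (a * T)]
    · refine le_trans ?_ (le_max_left _ _)
      have h2c : (0:ℝ) < 2 * c := by positivity
      rw [div_le_div_iff₀ hden h2c, ← haeq]
      have ha2 : (1:ℝ) ≤ a ^ 2 := by nlinarith
      nlinarith [mul_nonneg (mul_nonneg hv.le (mul_nonneg ha0.le hc.le))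
          (mul_nonneg (sub_nonneg.2 ha2) (sq_nonneg T))]
  have hKnn : 0 ≤ (2 * vbar / π) * (1 / (1 + (a * T) ^ 2)) * a * (1 + T ^ 2) * (π / 2) := by
    positivity
  calc |(-(2 * vbar / π) *
        (1 / (1 + (a * T) ^ 2) * (a * (1 / Real.cos x ^ 2 * (π / 2 * deriv θ t)))))|
      = (2 * vbar / π) * (1 / (1 + (a * T) ^ 2)) * a * (1 + T ^ 2) * (π / 2) * |deriv θ t| := by
        rw [hcos2, abs_mul, abs_mul, abs_mul, abs_mul, abs_mul, abs_neg,
          abs_of_nonneg (show (0:ℝ) ≤ 2 * vbar / π by positivity),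
          abs_of_nonneg (show (0:ℝ) ≤ 1 / (1 + (a * T) ^ 2) by positivity),
          abs_of_nonneg ha0.le,
          abs_of_nonneg (show (0:ℝ) ≤ 1 + T ^ 2 by positivity),
          abs_of_nonneg (show (0:ℝ) ≤ π / 2 by positivity)]
        ring
    _ ≤ max (π * vbar / (2 * c)) (2 * vbar * c / π) * B :=
        mul_le_mul key hθ' (abs_nonneg _) (le_max_left _ _ |>.trans' (by positivity))
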